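/- Consider the many-to-one matching market with F = {f1, f2, f3}, W = {w1, w2, w3, w4} and true preferences: ≻_{f1}: {w2,w3}, {w2,w4}, {w1,w3}, {w1,w2}, {w1,w4}, {w3,w4}, {w1}, {w2}, {w3}, {w4}; ≻_{f2}: {w1}, {w2}; ≻_{f3}: {w4}, {w1}; ≻_{w1}: f1, f3, f2; ≻_{w2}: f2, f1; ≻_{w3} = ≻_{w4}: f1, f3 (these preferences are substitutable and q-separable). Then: (i) the firm-optimal stable matching μ_F(≻) assigns μ_F(f1) = {w2,w3}, μ_F(f2) = {w1}, μ_F(f3) = {w4}, and the worker-optimal stable matching μ_W(≻) assigns μ_W(f1) = {w1,w3}, μ_W(f2) = {w2}, μ_W(f3) = {w4}; (ii) if worker w1 misreports ≻'_{w1}: f3 (declaring only f3 acceptable), then for ≻' = (≻_{-w1}, ≻'_{w1}), the firm-optimal stable matching μ'_F = μ_F(≻') assigns μ'_F(f1) = {w3,w4}, μ'_F(f2) = {w2}, μ'_F(f3) = {w1}; (iii) μ'_F is not stable for the true profile ≻, since the pair (f1, w1) blocks it; and (iv) under the firm-optimal stable rule h_F, w1's misreport is profitable: h_F(≻')(w1)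 = {f3} ≻_{w1} {f2} = h_F(≻)(w1), even though h_F(≻) ≠ μ_W(≻). -/

import Mathlib

/-!
Common framework for many-to-many matching markets (Manasero–Oviedo,
"General Manipulability Theorem for a Matching Model").

Agents on each side have strict linear orders (strict total orders) over
finsets of the other side.  `Pref.Ch` is the choice function, selecting the
most preferred subset.
-/

/-- A strict preference of an agent over subsets of the (finite) set `α` of
potential partners: a strict total order on `Finset α`, where `gt S T` means
`S` is strictly preferred to `T`. -/
structure Pref (α : Type*) [DecidableEq α] [Fintype α] where
  gt : Finset α → Finset α → Prop
  isSTO : IsStrictTotalOrder (Finset α) gt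

namespace Pref

variable {α : Type*} [DecidableEq α] [Fintype α]

/-- The choice set `Ch(S, ≻)`: the `≻`-maximal subset of `S`. -/
noncomputable def Ch (p : Pref α) (S : Finset α) : Finset α := by
  classical
  haveI := p.isSTO
  haveI : IsStrictTotalOrder (Finset α) (Function.swap p.gt) := IsStrictTotalOrder.swap _
  exact @Finset.max' _ (linearOrderOfSTO (Function.swap p.gt)) S.powerset
    ⟨∅, Finset.empty_mem_powerset S⟩

/-- Substitutability: if `w ∈ Ch(S)` then `w ∈ Ch(S \ {w'})` for any other `w' ∈ S`. -/
def Substitutable (p : Pref α) : Prop :=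
  ∀ (S : Finset α) (w w' : α), w ∈ S → w' ∈ S → w ≠ w' →
    w ∈ p.Ch S → w ∈ p.Ch (S.erase w')

/-- Law of aggregate demand: `Y ⊆ X` implies `|Ch(Y)| ≤ |Ch(X)|`. -/
def LAD (p : Pref α) : Prop :=
  ∀ Y X : Finset α, Y ⊆ X → (p.Ch Y).card ≤ (p.Ch X).card

/-- `p.HasList L` : the sets in `L` are exactly the acceptable sets, in strictly
decreasing order of preference and all preferred to `∅`; any set not in the
list (other than `∅`) is unacceptable, i.e. worse than `∅`. -/
def HasList (p : Pref α) (L : List (Finset α)) : Prop :=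
  List.Chain' p.gt (L ++ [∅]) ∧ ∀ S : Finset α, S ∉ L → S ≠ ∅ → p.gt ∅ S

/-- `q`-separability of a preference with quota `q`. -/
def QSeparable (p : Pref α) (q : ℕ) : Prop :=
  (∀ S : Finset α, q < S.card → p.gt ∅ S) ∧
  (∀ (S : Finset α) (v : α), v ∉ S → S.card < q → (p.gt (insert v S) S ↔ p.gt {v} ∅))

end Pref

/-- `p'` is the restriction `p |_T` of `p` to `T`:
(i) any set not contained in `T` is worse than `∅`;
(ii) for `S ⊆ T`, `S ≻' ∅ ↔ S ≻ ∅`;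
(iii) for `S, S' ⊆ T`, `S ≻' S' ↔ S ≻ S'`. -/
def IsRestriction {α : Type*} [DecidableEq α] [Fintype α]
    (p : Pref α) (T : Finset α) (p' : Pref α) : Prop :=
  (∀ S : Finset α, ¬ S ⊆ T → p'.gt ∅ S) ∧
  (∀ S : Finset α, S ⊆ T → (p'.gt S ∅ ↔ p.gt S ∅)) ∧
  (∀ S S' : Finset α, S ⊆ T → S' ⊆ T → (p'.gt S S' ↔ p.gt S S'))

variable (F W : Type*) [DecidableEq F] [Fintype F] [DecidableEq W] [Fintype W]

/-- A (many-to-many) matching between firms `F` and workers `W`. -/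
structure Matching where
  fm : F → Finset W
  wm : W → Finset F
  compat : ∀ f w, w ∈ fm f ↔ f ∈ wm w

/-- A preference profile: one preference for each firm and each worker. -/
structure Profile where
  fp : F → Pref W
  wp : W → Pref F

variable {F W}

/-- All agents' preferences are substitutable. -/
def Profile.Substitutable (P : Profile F W) : Prop :=
  (∀ f, (P.fp f).Substitutable) ∧ (∀ w, (P.wp w).Substitutable)

/-- All agents' preferences satisfy the law of aggregate demand. -/
def Profile.LAD (P : Profile F W) : Prop :=
  (∀ f, (P.fp f).LAD) ∧ (∀ w, (P.wp w).LAD)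

/-- The profile obtained from `P` by replacing firm `f`'s preference by `p`. -/
def Profile.updateFirm (P : Profile F W) (f : F) (p : Pref W) : Profile F W :=
  ⟨Function.update P.fp f p, P.wp⟩

/-- The profile obtained from `P` by replacing worker `w`'s preference by `p`. -/
def Profile.updateWorker (P : Profile F W) (w : W) (p : Pref F) : Profile F W :=
  ⟨P.fp, Function.update P.wp w p⟩

/-- Individual rationality: every agent chooses its whole assignment. -/
def IndRational (P : Profile F W) (μ : Matching F W) : Prop :=
  (∀ f, (P.fp f).Ch (μ.fm f) = μ.fm f) ∧ (∀ w, (P.wp w).Ch (μ.wm w) = μ.wm w)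

/-- The pair `(w, f)` blocks the matching `μ`. -/
def Blocks (P : Profile F W) (μ : Matching F W) (w : W) (f : F) : Prop :=
  w ∉ μ.fm f ∧ w ∈ (P.fp f).Ch (insert w (μ.fm f)) ∧ f ∈ (P.wp w).Ch (insert f (μ.wm w))

/-- (Pairwise) stability. -/
def Stable (P : Profile F W) (μ : Matching F W) : Prop :=
  IndRational P μ ∧ ∀ w f, ¬ Blocks P μ w f

/-- `μF` is the firm-optimal stable matching for `P`. -/
def FirmOptimal (P : Profile F W) (μF : Matching F W) : Prop :=
  Stable P μF ∧ ∀ μ, Stable P μ → ∀ f, μF.fm f = μ.fm f ∨ (P.fp f).gt (μF.fm f) (μ.fm f)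

/-- `μW` is the worker-optimal stable matching for `P`. -/
def WorkerOptimal (P : Profile F W) (μW : Matching F W) : Prop :=
  Stable P μW ∧ ∀ μ, Stable P μ → ∀ w, μW.wm w = μ.wm w ∨ (P.wp w).gt (μW.wm w) (μ.wm w)

/-- Firm `f` satisfies the manipulability property (w.r.t. the rule `h`, the true
profile `P` and the firm-optimal stable matching `μF`): if `h(≻)(f) ≠ μF(≻)(f)`
then some report `≻'_f` (in the domain: substitutable and LAD) gives `f` a
strictly `≻_f`-better assignment. -/
def FirmManip (h : Profile F W → Matching F W) (P : Profile F W)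
    (μF : Matching F W) (f : F) : Prop :=
  (h P).fm f ≠ μF.fm f → ∃ p' : Pref W, p'.Substitutable ∧ p'.LAD ∧
    (P.fp f).gt ((h (P.updateFirm f p')).fm f) ((h P).fm f)

/-- Firm `f` satisfies the manipulability property with Blair order. -/
def FirmManipB (h : Profile F W → Matching F W) (P : Profile F W)
    (μF : Matching F W) (f : F) : Prop :=
  (h P).fm f ≠ μF.fm f → ∃ p' : Pref W, p'.Substitutable ∧ p'.LAD ∧
    ((P.fp f).Ch ((h (P.updateFirm f p')).fm f ∪ (h P).fm f) = (h (P.updateFirm f p')).fm f ∧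
      (h (P.updateFirm f p')).fm f ≠ (h P).fm f)

/-- Worker `w` satisfies the manipulability property. -/
def WorkerManip (h : Profile F W → Matching F W) (P : Profile F W)
    (μW : Matching F W) (w : W) : Prop :=
  (h P).wm w ≠ μW.wm w → ∃ p' : Pref F, p'.Substitutable ∧ p'.LAD ∧
    (P.wp w).gt ((h (P.updateWorker w p')).wm w) ((h P).wm w)

/-- Worker `w` satisfies the manipulability property with Blair order. -/
def WorkerManipB (h : Profile F W → Matching F W) (P : Profile F W)
    (μW : Matching F W) (w : W) : Prop :=
  (h P).wm w ≠ μW.wm w → ∃ p' : Pref F, p'.Substitutable ∧ p'.LAD ∧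
    ((P.wp w).Ch ((h (P.updateWorker w p')).wm w ∪ (h P).wm w) = (h (P.updateWorker w p')).wm w ∧
      (h (P.updateWorker w p')).wm w ≠ (h P).wm w)

namespace Pref
variable {α : Type*} [DecidableEq α] [Fintype α]

lemma gt_trans' (p : Pref α) {a b c : Finset α} (h1 : p.gt a b) (h2 : p.gt b c) : p.gt a c := by
  haveI := p.isSTO; exact _root_.trans h1 h2

lemma gt_irrefl' (p : Pref α) (a : Finset α) : ¬ p.gt a a := by
  haveI := p.isSTO; exact irrefl a

lemma gt_asymm' (p : Pref α) {a b : Finset α} (h : p.gt a b) : ¬ p.gt b a := by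
  haveI := p.isSTO; exact asymm h

lemma Ch_spec (p : Pref α) (S : Finset α) :
    p.Ch S ⊆ S ∧ ∀ A ⊆ S, A ≠ p.Ch S → p.gt (p.Ch S) A := by
  classical
  haveI := p.isSTO
  haveI h2 : IsStrictTotalOrder (Finset α) (Function.swap p.gt) := IsStrictTotalOrder.swap _
  have hch : p.Ch S = @Finset.max' _ (linearOrderOfSTO (Function.swap p.gt)) S.powerset
      ⟨∅, Finset.empty_mem_powerset S⟩ := rfl
  constructor
  · have := @Finset.max'_mem _ (linearOrderOfSTO (Function.swap p.gt)) S.powerset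
      ⟨∅, Finset.empty_mem_powerset S⟩
    rw [Finset.mem_powerset] at this
    rw [hch]; exact this
  · intro A hA hne
    have hle := @Finset.le_max' _ (linearOrderOfSTO (Function.swap p.gt)) S.powerset A
      (Finset.mem_powerset.mpr hA)
    rw [← hch] at hle
    rcases hle with h | h
    · exact absurd h hne
    · exact h

lemma Ch_subset (p : Pref α) (S : Finset α) : p.Ch S ⊆ S := (p.Ch_spec S).1

lemma gt_Ch (p : Pref α) {S A : Finset α} (hA : A ⊆ S) (hne : A ≠ p.Ch S) :
    p.gt (p.Ch S) A := (p.Ch_spec S).2 A hA hne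

lemma Ch_eq_of (p : Pref α) {S T : Finset α} (hT : T ⊆ S)
    (h : ∀ A ⊆ S, A ≠ T → p.gt T A) : p.Ch S = T := by
  by_contra hne
  exact p.gt_irrefl' _ (p.gt_trans' (p.gt_Ch hT (Ne.symm hne))
    (h _ (p.Ch_subset S) hne))

/-- the rank of a set in the list semantics: listed sets first (in list order),
then `∅`, then everything else. -/
def rk (L : List (Finset α)) (S : Finset α) : ℕ :=
  if S ∈ L then L.idxOf S else if S = ∅ then L.length else L.length + 1

lemma HasList.pairwise' {p : Pref α} {L : List (Finset α)} (h : p.HasList L) :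
    (L ++ [∅]).Pairwise p.gt := by
  haveI := p.isSTO
  exact List.isChain_iff_pairwise.mp h.1

lemma HasList.empty_not_mem {p : Pref α} {L : List (Finset α)} (h : p.HasList L) :
    (∅ : Finset α) ∉ L := by
  intro hmem
  have hpw := h.pairwise'
  have := (List.pairwise_append.mp hpw).2.2 ∅ hmem ∅ (by simp)
  exact p.gt_irrefl' _ this

lemma pairwise_gt_of_indexOf_lt {p : Pref α} {M : List (Finset α)}
    (hpw : M.Pairwise p.gt) {A B : Finset α} (hA : A ∈ M) (hB : B ∈ M)
    (h : M.idxOf A < M.idxOf B) : p.gt A B := by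
  have hA' := List.idxOf_lt_length_iff.mpr hA
  have hB' := List.idxOf_lt_length_iff.mpr hB
  have := List.pairwise_iff_get.mp hpw ⟨_, hA'⟩ ⟨_, hB'⟩ h
  rwa [List.idxOf_get, List.idxOf_get] at this

lemma HasList.gt_rk {p : Pref α} {L : List (Finset α)} (h : p.HasList L)
    {A B : Finset α} (hAB : rk L A < rk L B) : p.gt A B := by
  classical
  have hpw := h.pairwise'
  have hnil : (∅ : Finset α) ∈ L ++ [∅] := by simp
  have hidxE : (L ++ [∅]).idxOf (∅ : Finset α) = L.length := by
    rw [List.idxOf_append_of_notMem h.empty_not_mem]; simp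
  unfold rk at hAB
  by_cases hAL : A ∈ L
  · have hAM : A ∈ L ++ [∅] := by simp [hAL]
    have hidxA : (L ++ [∅]).idxOf A = L.idxOf A := List.idxOf_append_of_mem hAL
    have hALlen : L.idxOf A < L.length := List.idxOf_lt_length_iff.mpr hAL
    by_cases hBL : B ∈ L
    · exact pairwise_gt_of_indexOf_lt hpw hAM (by simp [hBL])
        (by rw [hidxA, List.idxOf_append_of_mem hBL]; simpa [hAL, hBL] using hAB)
    · have hAE : p.gt A ∅ := pairwise_gt_of_indexOf_lt hpw hAM hnil
        (by rw [hidxA, hidxE]; exact hALlen)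
      by_cases hBE : B = ∅
      · rwa [hBE]
      · exact p.gt_trans' hAE (h.2 B hBL hBE)
  · by_cases hAE : A = ∅
    · subst hAE
      simp only [h.empty_not_mem, if_neg, if_pos rfl, if_true] at hAB
      have hBL : B ∉ L := by
        intro hBL
        have := List.idxOf_lt_length_iff.mpr hBL
        simp [hBL, h.empty_not_mem] at hAB
        omega
      have hBE : B ≠ ∅ := by
        intro e; subst e; simp [h.empty_not_mem] at hAB
      exact h.2 B hBL hBE
    · exfalso
      simp only [hAL, hAE, if_neg, if_false] at hAB
      split_ifs at hAB with h1 h2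
      · have := List.idxOf_lt_length_iff.mpr h1; omega
      · omega
      · omega

lemma HasList.Ch_eq {p : Pref α} {L : List (Finset α)} (h : p.HasList L) {S T : Finset α}
    (hT : T ⊆ S) (hall : ∀ A : Finset α, A ⊆ S → A ≠ T → rk L T < rk L A) : p.Ch S = T :=
  p.Ch_eq_of hT fun A hA hne => h.gt_rk (hall A hA hne)

lemma HasList.Ch_mem {p : Pref α} {L : List (Finset α)} (h : p.HasList L) (S : Finset α) :
    p.Ch S ∈ L ∨ p.Ch S = ∅ := by
  by_contra hc
  push_neg at hc
  exact p.gt_asymm' (h.2 _ hc.1 (Finset.nonempty_iff_ne_empty.mp hc.2))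
    (p.gt_Ch (S := S) (A := ∅) (Finset.empty_subset S) (Ne.symm (Finset.nonempty_iff_ne_empty.mp hc.2)))

lemma HasList.mem_or_empty {p : Pref α} {L : List (Finset α)} (h : p.HasList L)
    {S : Finset α} (hIR : p.Ch S = S) : S ∈ L ∨ S = ∅ := hIR ▸ h.Ch_mem S

end Pref
namespace Pref
variable {α : Type*} [DecidableEq α] [Fintype α]

lemma notmem_Ch_of {p : Pref α} {L : List (Finset α)} (h : p.HasList L) {S T : Finset α}
    {a : α} (hT : T ⊆ S)
    (hall : ∀ A : Finset α, A ⊆ S → A ≠ T → rk L T < rk L A)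
    (ha : a ∉ T) (hmem : a ∈ p.Ch S) : False := by
  rw [h.Ch_eq hT hall] at hmem; exact ha hmem

end Pref
section MarketLemmas

/-- In the true market, no stable matching assigns `w₄` to `f₁`. -/
lemma ruleA {P : Profile (Fin 3) (Fin 4)}
    (hf1 : (P.fp 0).HasList
      [{1, 2}, {1, 3}, {0, 2}, {0, 1}, {0, 3}, {2, 3}, {0}, {1}, {2}, {3}])
    (hf2 : (P.fp 1).HasList [{0}, {1}])
    (hf3 : (P.fp 2).HasList [{3}, {0}])
    (hw1 : (P.wp 0).HasList [{0}, {2}, {1}])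
    (hw2 : (P.wp 1).HasList [{1}, {0}])
    (hw3 : (P.wp 2).HasList [{0}, {2}])
    (hw4 : (P.wp 3).HasList [{0}, {2}])
    {μ : Matching (Fin 3) (Fin 4)} (hst : Stable P μ) : (0 : Fin 3) ∉ μ.wm 3 := by
  intro h0
  have h3f0 : (3 : Fin 4) ∈ μ.fm 0 := (μ.compat 0 3).mpr h0
  have e0 := hf1.mem_or_empty (hst.1.1 0)
  simp only [List.mem_cons, List.not_mem_nil, or_false] at e0
  -- helper : μ.wm 2 = ∅ whenever 2 ∉ μ.fm 0
  have hw3empty : (2 : Fin 4) ∉ μ.fm 0 → μ.wm 2 = ∅ := by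
    intro h2
    have e2 := hw3.mem_or_empty (hst.1.2 2)
    simp only [List.mem_cons, List.not_mem_nil, or_false] at e2
    rcases e2 with (e2 | e2) | e2
    · exact absurd ((μ.compat 0 2).mpr (by rw [e2]; decide)) h2
    · have h22 : (2 : Fin 4) ∈ μ.fm 2 := (μ.compat 2 2).mpr (by rw [e2]; decide)
      have e3 := hf3.mem_or_empty (hst.1.1 2)
      simp only [List.mem_cons, List.not_mem_nil, or_false] at e3
      rcases e3 with (e3 | e3) | e3 <;> rw [e3] at h22 <;> exact absurd h22 (by decide)
    · exact e2
  -- blocking by (w₃, f₁) when w₃ is unmatched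
  have blk3 : μ.wm 2 = ∅ → (2 : Fin 4) ∉ μ.fm 0 →
      (2 : Fin 4) ∈ (P.fp 0).Ch (insert 2 (μ.fm 0)) → False := by
    intro hwm h2 hch
    exact hst.2 2 0 ⟨h2, hch, by
      rw [hwm, hw3.Ch_eq (S := insert 0 ∅) (T := {0}) (by decide) (by decide)]; decide⟩
  rcases e0 with (e | e | e | e | e | e | e | e | e | e) | e <;>
    first
    | (exact absurd h3f0 (by rw [e]; decide))
    | skip
  -- remaining possible cases: μ.fm 0 = {1,3}, {0,3}, {2,3}, {3}
  case _ => -- {1,3}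
    refine blk3 (hw3empty (by rw [e]; decide)) (by rw [e]; decide) ?_
    rw [e, hf1.Ch_eq (S := insert 2 {1, 3}) (T := {1, 2}) (by decide) (by decide)]; decide
  case _ => -- {0,3}
    refine blk3 (hw3empty (by rw [e]; decide)) (by rw [e]; decide) ?_
    rw [e, hf1.Ch_eq (S := insert 2 {0, 3}) (T := {0, 2}) (by decide) (by decide)]; decide
  case _ => -- {2,3}
    -- w₂'s match
    have e2 := hw2.mem_or_empty (hst.1.2 1)
    simp only [List.mem_cons, List.not_mem_nil, or_false] at e2
    rcases e2 with (e2 | e2) | e2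
    · -- μ.wm 1 = {1} : w₂ at f₂; then (w₁, f₁) blocks
      have h1f1 : (1 : Fin 4) ∈ μ.fm 1 := (μ.compat 1 1).mpr (by rw [e2]; decide)
      have efm1 := hf2.mem_or_empty (hst.1.1 1)
      simp only [List.mem_cons, List.not_mem_nil, or_false] at efm1
      have hfm1 : μ.fm 1 = {1} := by
        rcases efm1 with (e3 | e3) | e3
        · rw [e3] at h1f1; exact absurd h1f1 (by decide)
        · exact e3
        · rw [e3] at h1f1; exact absurd h1f1 (by decide)
      -- μ.wm 0 ∈ {∅, {2}}
      have e1 := hw1.mem_or_empty (hst.1.2 0)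
      simp only [List.mem_cons, List.not_mem_nil, or_false] at e1
      have h415 : (0 : Fin 4) ∈ (P.fp 0).Ch (insert 0 (μ.fm 0)) := by
        rw [e, hf1.Ch_eq (S := insert 0 {2, 3}) (T := {0, 2}) (by decide) (by decide)]; decide
      have h0notfm0 : (0 : Fin 3) ∉ μ.wm 0 ∨ True := Or.inr trivial
      rcases e1 with (e1 | e1 | e1) | e1
      · -- μ.wm 0 = {0} : 0 ∈ μ.fm 0 = {2,3}, contradiction
        have := (μ.compat 0 0).mpr (by rw [e1]; decide)
        rw [e] at this; exact absurd this (by decide)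
      · -- μ.wm 0 = {2} : (w₁, f₁) blocks
        exact hst.2 0 0 ⟨by rw [e]; decide, h415, by
          rw [e1, hw1.Ch_eq (S := insert 0 {2}) (T := {0}) (by decide) (by decide)]; decide⟩
      · -- μ.wm 0 = {1} : 0 ∈ μ.fm 1 = {1}, contradiction
        have := (μ.compat 1 0).mpr (by rw [e1]; decide)
        rw [hfm1] at this; exact absurd this (by decide)
      · -- μ.wm 0 = ∅ : (w₁, f₁) blocks
        exact hst.2 0 0 ⟨by rw [e]; decide, h415, by
          rw [e1, hw1.Ch_eq (S := insert 0 ∅) (T := {0}) (by decide) (by decide)]; decide⟩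
    · -- μ.wm 1 = {0} : 1 ∈ μ.fm 0 = {2,3}, contradiction
      have := (μ.compat 0 1).mpr (by rw [e2]; decide)
      rw [e] at this; exact absurd this (by decide)
    · -- μ.wm 1 = ∅ : (w₂, f₁) blocks
      exact hst.2 1 0 ⟨by rw [e]; decide, by
        rw [e, hf1.Ch_eq (S := insert 1 {2, 3}) (T := {1, 2}) (by decide) (by decide)]; decide, by
        rw [e2, hw2.Ch_eq (S := insert 0 ∅) (T := {0}) (by decide) (by decide)]; decide⟩
  case _ => -- {3}
    refine blk3 (hw3empty (by rw [e]; decide)) (by rw [e]; decide) ?_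
    rw [e, hf1.Ch_eq (S := insert 2 {3}) (T := {2, 3}) (by decide) (by decide)]; decide

end MarketLemmas
/-- In the misreported market, `w₁` is never matched to `f₁` or `f₂`. -/
lemma ruleB {Q : Profile (Fin 3) (Fin 4)}
    (hw1 : (Q.wp 0).HasList [{2}])
    {μ : Matching (Fin 3) (Fin 4)} (hst : Stable Q μ) :
    (0 : Fin 3) ∉ μ.wm 0 ∧ (1 : Fin 3) ∉ μ.wm 0 := by
  have e := hw1.mem_or_empty (hst.1.2 0)
  simp only [List.mem_cons, List.not_mem_nil, or_false] at e
  rcases e with e | e <;> rw [e] <;> exact ⟨by decide, by decide⟩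

/-- In the misreported market, `f₁` never gets `{w₂, w₃}` or `{w₂, w₄}`. -/
lemma ruleC {Q : Profile (Fin 3) (Fin 4)}
    (hf2 : (Q.fp 1).HasList [{0}, {1}])
    (hw1 : (Q.wp 0).HasList [{2}])
    (hw2 : (Q.wp 1).HasList [{1}, {0}])
    {μ : Matching (Fin 3) (Fin 4)} (hst : Stable Q μ) :
    μ.fm 0 ≠ {1, 2} ∧ μ.fm 0 ≠ {1, 3} := by
  have key : (1 : Fin 4) ∈ μ.fm 0 → False := by
    intro h1
    have hw01 : (0 : Fin 3) ∈ μ.wm 1 := (μ.compat 0 1).mp h1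
    have e2 := hw2.mem_or_empty (hst.1.2 1)
    simp only [List.mem_cons, List.not_mem_nil, or_false] at e2
    have ewm1 : μ.wm 1 = {0} := by
      rcases e2 with (e | e) | e
      · rw [e] at hw01; exact absurd hw01 (by decide)
      · exact e
      · rw [e] at hw01; exact absurd hw01 (by decide)
    have efm1 := hf2.mem_or_empty (hst.1.1 1)
    simp only [List.mem_cons, List.not_mem_nil, or_false] at efm1
    have hfm1 : μ.fm 1 = ∅ := by
      rcases efm1 with (e | e) | e
      · exact absurd ((μ.compat 1 0).mp (by rw [e]; decide)) (ruleB hw1 hst).2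
      · have := (μ.compat 1 1).mp (by rw [e]; decide)
        rw [ewm1] at this; exact absurd this (by decide)
      · exact e
    exact hst.2 1 1 ⟨by rw [hfm1]; decide, by
      rw [hfm1, hf2.Ch_eq (S := insert 1 ∅) (T := {1}) (by decide) (by decide)]; decide, by
      rw [ewm1, hw2.Ch_eq (S := insert 1 {0}) (T := {1}) (by decide) (by decide)]; decide⟩
  exact ⟨fun e => key (by rw [e]; decide), fun e => key (by rw [e]; decide)⟩

/-- In the misreported market, `f₃` never gets `{w₄}`. -/
lemma ruleD {Q : Profile (Fin 3) (Fin 4)}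
    (hf1 : (Q.fp 0).HasList
      [{1, 2}, {1, 3}, {0, 2}, {0, 1}, {0, 3}, {2, 3}, {0}, {1}, {2}, {3}])
    (hf2 : (Q.fp 1).HasList [{0}, {1}])
    (hw1 : (Q.wp 0).HasList [{2}])
    (hw2 : (Q.wp 1).HasList [{1}, {0}])
    (hw4 : (Q.wp 3).HasList [{0}, {2}])
    {μ : Matching (Fin 3) (Fin 4)} (hst : Stable Q μ) : μ.fm 2 ≠ {3} := by
  intro e3
  have h23 : (2 : Fin 3) ∈ μ.wm 3 := (μ.compat 2 3).mp (by rw [e3]; decide)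
  have e4 := hw4.mem_or_empty (hst.1.2 3)
  simp only [List.mem_cons, List.not_mem_nil, or_false] at e4
  have ewm3 : μ.wm 3 = {2} := by
    rcases e4 with (e | e) | e
    · rw [e] at h23; exact absurd h23 (by decide)
    · exact e
    · rw [e] at h23; exact absurd h23 (by decide)
  have h3f0 : (3 : Fin 4) ∉ μ.fm 0 := by
    intro h
    have := (μ.compat 0 3).mp h
    rw [ewm3] at this; exact absurd this (by decide)
  have h0f0 : (0 : Fin 4) ∉ μ.fm 0 :=
    fun h => (ruleB hw1 hst).1 ((μ.compat 0 0).mp h)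
  have e0 := hf1.mem_or_empty (hst.1.1 0)
  simp only [List.mem_cons, List.not_mem_nil, or_false] at e0
  have blk : (3 : Fin 4) ∈ (Q.fp 0).Ch (insert 3 (μ.fm 0)) → False := by
    intro hch
    exact hst.2 3 0 ⟨h3f0, hch, by
      rw [ewm3, hw4.Ch_eq (S := insert 0 {2}) (T := {0}) (by decide) (by decide)]; decide⟩
  rcases e0 with (e | e | e | e | e | e | e | e | e | e) | e
  · exact (ruleC hf2 hw1 hw2 hst).1 e
  · exact (ruleC hf2 hw1 hw2 hst).2 e
  · exact h0f0 (by rw [e]; decide)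
  · exact h0f0 (by rw [e]; decide)
  · exact h0f0 (by rw [e]; decide)
  · exact h3f0 (by rw [e]; decide)
  · exact h0f0 (by rw [e]; decide)
  · exact blk (by rw [e, hf1.Ch_eq (S := insert 3 {1}) (T := {1, 3}) (by decide) (by decide)]; decide)
  · exact blk (by rw [e, hf1.Ch_eq (S := insert 3 {2}) (T := {2, 3}) (by decide) (by decide)]; decide)
  · exact h3f0 (by rw [e]; decide)
  · exact blk (by rw [e, hf1.Ch_eq (S := insert 3 ∅) (T := {3}) (by decide) (by decide)]; decide)
/-- The firm-optimal stable matching of the true market is stable. -/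
lemma stableF {P : Profile (Fin 3) (Fin 4)}
    (hf1 : (P.fp 0).HasList
      [{1, 2}, {1, 3}, {0, 2}, {0, 1}, {0, 3}, {2, 3}, {0}, {1}, {2}, {3}])
    (hf2 : (P.fp 1).HasList [{0}, {1}])
    (hf3 : (P.fp 2).HasList [{3}, {0}])
    (hw1 : (P.wp 0).HasList [{0}, {2}, {1}])
    (hw2 : (P.wp 1).HasList [{1}, {0}])
    (hw3 : (P.wp 2).HasList [{0}, {2}])
    (hw4 : (P.wp 3).HasList [{0}, {2}]) :
    Stable P (⟨![{1, 2}, {0}, {3}], ![{1}, {0}, {0}, {2}], by decide⟩ :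
      Matching (Fin 3) (Fin 4)) := by
  refine ⟨⟨fun f => ?_, fun w => ?_⟩, fun w f => ?_⟩
  · fin_cases f
    · exact hf1.Ch_eq (by decide) (by decide)
    · exact hf2.Ch_eq (by decide) (by decide)
    · exact hf3.Ch_eq (by decide) (by decide)
  · fin_cases w
    · exact hw1.Ch_eq (by decide) (by decide)
    · exact hw2.Ch_eq (by decide) (by decide)
    · exact hw3.Ch_eq (by decide) (by decide)
    · exact hw4.Ch_eq (by decide) (by decide)
  · rintro ⟨h1, h2, h3⟩
    fin_cases w <;> fin_cases f
    · exact Pref.notmem_Ch_of hf1 (T := {1, 2}) (by decide) (by decide) (by decide) h2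
    · exact h1 (by decide)
    · exact Pref.notmem_Ch_of hf3 (T := {3}) (by decide) (by decide) (by decide) h2
    · exact h1 (by decide)
    · exact Pref.notmem_Ch_of hf2 (T := {0}) (by decide) (by decide) (by decide) h2
    · exact Pref.notmem_Ch_of hf3 (T := {3}) (by decide) (by decide) (by decide) h2
    · exact h1 (by decide)
    · exact Pref.notmem_Ch_of hf2 (T := {0}) (by decide) (by decide) (by decide) h2
    · exact Pref.notmem_Ch_of hf3 (T := {3}) (by decide) (by decide) (by decide) h2
    · exact Pref.notmem_Ch_of hf1 (T := {1, 2}) (by decide) (by decide) (by decide) h2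
    · exact Pref.notmem_Ch_of hf2 (T := {0}) (by decide) (by decide) (by decide) h2
    · exact h1 (by decide)
/-- The worker-optimal stable matching of the true market is stable. -/
lemma stableW {P : Profile (Fin 3) (Fin 4)}
    (hf1 : (P.fp 0).HasList
      [{1, 2}, {1, 3}, {0, 2}, {0, 1}, {0, 3}, {2, 3}, {0}, {1}, {2}, {3}])
    (hf2 : (P.fp 1).HasList [{0}, {1}])
    (hf3 : (P.fp 2).HasList [{3}, {0}])
    (hw1 : (P.wp 0).HasList [{0}, {2}, {1}])
    (hw2 : (P.wp 1).HasList [{1}, {0}])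
    (hw3 : (P.wp 2).HasList [{0}, {2}])
    (hw4 : (P.wp 3).HasList [{0}, {2}]) :
    Stable P (⟨![{0, 2}, {1}, {3}], ![{0}, {1}, {0}, {2}], by decide⟩ :
      Matching (Fin 3) (Fin 4)) := by
  refine ⟨⟨fun f => ?_, fun w => ?_⟩, fun w f => ?_⟩
  · fin_cases f
    · exact hf1.Ch_eq (by decide) (by decide)
    · exact hf2.Ch_eq (by decide) (by decide)
    · exact hf3.Ch_eq (by decide) (by decide)
  · fin_cases w
    · exact hw1.Ch_eq (by decide) (by decide)
    · exact hw2.Ch_eq (by decide) (by decide)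
    · exact hw3.Ch_eq (by decide) (by decide)
    · exact hw4.Ch_eq (by decide) (by decide)
  · rintro ⟨h1, h2, h3⟩
    fin_cases w <;> fin_cases f
    · exact h1 (by decide)
    · exact Pref.notmem_Ch_of hw1 (T := {0}) (by decide) (by decide) (by decide) h3
    · exact Pref.notmem_Ch_of hf3 (T := {3}) (by decide) (by decide) (by decide) h2
    · exact Pref.notmem_Ch_of hw2 (T := {1}) (by decide) (by decide) (by decide) h3
    · exact h1 (by decide)
    · exact Pref.notmem_Ch_of hf3 (T := {3}) (by decide) (by decide) (by decide) h2
    · exact h1 (by decide)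
    · exact Pref.notmem_Ch_of hf2 (T := {1}) (by decide) (by decide) (by decide) h2
    · exact Pref.notmem_Ch_of hf3 (T := {3}) (by decide) (by decide) (by decide) h2
    · exact Pref.notmem_Ch_of hf1 (T := {0, 2}) (by decide) (by decide) (by decide) h2
    · exact Pref.notmem_Ch_of hf2 (T := {1}) (by decide) (by decide) (by decide) h2
    · exact h1 (by decide)

/-- The firm-optimal stable matching of the misreported market is stable. -/
lemma stableFp {Q : Profile (Fin 3) (Fin 4)}
    (hf1 : (Q.fp 0).HasList
      [{1, 2}, {1, 3}, {0, 2}, {0, 1}, {0, 3}, {2, 3}, {0}, {1}, {2}, {3}])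
    (hf2 : (Q.fp 1).HasList [{0}, {1}])
    (hf3 : (Q.fp 2).HasList [{3}, {0}])
    (hq1 : (Q.wp 0).HasList [{2}])
    (hw2 : (Q.wp 1).HasList [{1}, {0}])
    (hw3 : (Q.wp 2).HasList [{0}, {2}])
    (hw4 : (Q.wp 3).HasList [{0}, {2}]) :
    Stable Q (⟨![{2, 3}, {1}, {0}], ![{2}, {1}, {0}, {0}], by decide⟩ :
      Matching (Fin 3) (Fin 4)) := by
  refine ⟨⟨fun f => ?_, fun w => ?_⟩, fun w f => ?_⟩
  · fin_cases f
    · exact hf1.Ch_eq (by decide) (by decide)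
    · exact hf2.Ch_eq (by decide) (by decide)
    · exact hf3.Ch_eq (by decide) (by decide)
  · fin_cases w
    · exact hq1.Ch_eq (by decide) (by decide)
    · exact hw2.Ch_eq (by decide) (by decide)
    · exact hw3.Ch_eq (by decide) (by decide)
    · exact hw4.Ch_eq (by decide) (by decide)
  · rintro ⟨h1, h2, h3⟩
    fin_cases w <;> fin_cases f
    · exact Pref.notmem_Ch_of hq1 (T := {2}) (by decide) (by decide) (by decide) h3
    · exact Pref.notmem_Ch_of hq1 (T := {2}) (by decide) (by decide) (by decide) h3
    · exact h1 (by decide)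
    · exact Pref.notmem_Ch_of hw2 (T := {1}) (by decide) (by decide) (by decide) h3
    · exact h1 (by decide)
    · exact Pref.notmem_Ch_of hf3 (T := {0}) (by decide) (by decide) (by decide) h2
    · exact h1 (by decide)
    · exact Pref.notmem_Ch_of hf2 (T := {1}) (by decide) (by decide) (by decide) h2
    · exact Pref.notmem_Ch_of hf3 (T := {0}) (by decide) (by decide) (by decide) h2
    · exact h1 (by decide)
    · exact Pref.notmem_Ch_of hf2 (T := {1}) (by decide) (by decide) (by decide) h2
    · exact Pref.notmem_Ch_of hw4 (T := {0}) (by decide) (by decide) (by decide) h3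
/-- Example of Section 4.  Many-to-one market with
`F = {f₁, f₂, f₃}` (encoded `Fin 3`, `fᵢ = i - 1`) and `W = {w₁, w₂, w₃, w₄}`
(encoded `Fin 4`, `wⱼ = j - 1`), with the substitutable, `q`-separable true
preferences of the paper.  Then:
(i) the firm-optimal stable matching `μF` is `f₁ ↦ {w₂, w₃}, f₂ ↦ {w₁}, f₃ ↦ {w₄}`
and the worker-optimal stable matching `μW` is `f₁ ↦ {w₁, w₃}, f₂ ↦ {w₂}, f₃ ↦ {w₄}`;
(ii) if `w₁` misreports `≻'_{w₁} : f₃`, the firm-optimal stable matching `μF'` of the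
misreported profile is `f₁ ↦ {w₃, w₄}, f₂ ↦ {w₂}, f₃ ↦ {w₁}`;
(iii) `μF'` is not stable for the true profile: `(f₁, w₁)` blocks it;
(iv) the misreport is profitable for `w₁` under the firm-optimal stable rule:
`μF'(w₁) = {f₃} ≻_{w₁} {f₂} = μF(w₁)`, even though `μF(w₁) ≠ μW(w₁)`. -/
theorem stmt10 (P : Profile (Fin 3) (Fin 4))
    (hf1 : (P.fp 0).HasList
      [{1, 2}, {1, 3}, {0, 2}, {0, 1}, {0, 3}, {2, 3}, {0}, {1}, {2}, {3}])
    (hf2 : (P.fp 1).HasList [{0}, {1}])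
    (hf3 : (P.fp 2).HasList [{3}, {0}])
    (hw1 : (P.wp 0).HasList [{0}, {2}, {1}])
    (hw2 : (P.wp 1).HasList [{1}, {0}])
    (hw3 : (P.wp 2).HasList [{0}, {2}])
    (hw4 : (P.wp 3).HasList [{0}, {2}])
    (p' : Pref (Fin 3)) (hp' : p'.HasList [{2}]) :
    ∃ μF μW μF' : Matching (Fin 3) (Fin 4),
      -- (i)
      FirmOptimal P μF ∧ WorkerOptimal P μW ∧
      μF.fm 0 = {1, 2} ∧ μF.fm 1 = {0} ∧ μF.fm 2 = {3} ∧
      μW.fm 0 = {0, 2} ∧ μW.fm 1 = {1} ∧ μW.fm 2 = {3} ∧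
      -- (ii)
      FirmOptimal (P.updateWorker 0 p') μF' ∧
      μF'.fm 0 = {2, 3} ∧ μF'.fm 1 = {1} ∧ μF'.fm 2 = {0} ∧
      -- (iii)
      ¬ Stable P μF' ∧ Blocks P μF' 0 0 ∧
      -- (iv)
      μF'.wm 0 = {2} ∧ μF.wm 0 = {1} ∧
      (P.wp 0).gt (μF'.wm 0) (μF.wm 0) ∧ μF.wm 0 ≠ μW.wm 0 := by

  classical
  have hq1 : ((P.updateWorker 0 p').wp 0).HasList [{2}] := by
    show ((Function.update P.wp 0 p') 0).HasList [{2}]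
    rw [Function.update_self]; exact hp'
  have hq2 : ((P.updateWorker 0 p').wp 1).HasList [{1}, {0}] := by
    show ((Function.update P.wp 0 p') 1).HasList _
    rw [Function.update_of_ne (by decide)]; exact hw2
  have hq3 : ((P.updateWorker 0 p').wp 2).HasList [{0}, {2}] := by
    show ((Function.update P.wp 0 p') 2).HasList _
    rw [Function.update_of_ne (by decide)]; exact hw3
  have hq4 : ((P.updateWorker 0 p').wp 3).HasList [{0}, {2}] := by
    show ((Function.update P.wp 0 p') 3).HasList _
    rw [Function.update_of_ne (by decide)]; exact hw4
  have hqf1 : ((P.updateWorker 0 p').fp 0).HasList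
      [{1, 2}, {1, 3}, {0, 2}, {0, 1}, {0, 3}, {2, 3}, {0}, {1}, {2}, {3}] := hf1
  have hqf2 : ((P.updateWorker 0 p').fp 1).HasList [{0}, {1}] := hf2
  have hqf3 : ((P.updateWorker 0 p').fp 2).HasList [{3}, {0}] := hf3
  have hblk : Blocks P
      (⟨![{2, 3}, {1}, {0}], ![{2}, {1}, {0}, {0}], by decide⟩ : Matching (Fin 3) (Fin 4))
      0 0 := by
    refine ⟨by decide, ?_, ?_⟩
    · show (0 : Fin 4) ∈ (P.fp 0).Ch (insert 0 {2, 3})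
      rw [hf1.Ch_eq (T := {0, 2}) (by decide) (by decide)]; decide
    · show (0 : Fin 3) ∈ (P.wp 0).Ch (insert 0 {2})
      rw [hw1.Ch_eq (T := {0}) (by decide) (by decide)]; decide
  refine ⟨⟨![{1, 2}, {0}, {3}], ![{1}, {0}, {0}, {2}], by decide⟩,
      ⟨![{0, 2}, {1}, {3}], ![{0}, {1}, {0}, {2}], by decide⟩,
      ⟨![{2, 3}, {1}, {0}], ![{2}, {1}, {0}, {0}], by decide⟩,
      ⟨stableF hf1 hf2 hf3 hw1 hw2 hw3 hw4, ?_⟩,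
      ⟨stableW hf1 hf2 hf3 hw1 hw2 hw3 hw4, ?_⟩,
      rfl, rfl, rfl, rfl, rfl, rfl,
      ⟨stableFp hqf1 hqf2 hqf3 hq1 hq2 hq3 hq4, ?_⟩,
      rfl, rfl, rfl, ?_, hblk, rfl, rfl, hw1.gt_rk (by decide), by decide⟩
  · -- firm optimality in the true market: every firm gets its top set
    intro μ hst f
    fin_cases f
    · rcases eq_or_ne (μ.fm 0) ({1, 2} : Finset (Fin 4)) with h | h
      · exact Or.inl h.symm
      · exact Or.inr (hf1.gt_rk ((by decide :
          ∀ A : Finset (Fin 4), A ≠ {1, 2} →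
            Pref.rk [{1, 2}, {1, 3}, {0, 2}, {0, 1}, {0, 3}, {2, 3}, {0}, {1}, {2}, {3}] {1, 2} <
            Pref.rk [{1, 2}, {1, 3}, {0, 2}, {0, 1}, {0, 3}, {2, 3}, {0}, {1}, {2}, {3}] A) _ h))
    · rcases eq_or_ne (μ.fm 1) ({0} : Finset (Fin 4)) with h | h
      · exact Or.inl h.symm
      · exact Or.inr (hf2.gt_rk ((by decide : ∀ A : Finset (Fin 4), A ≠ {0} →
          Pref.rk [{0}, {1}] {0} < Pref.rk [{0}, {1}] A) _ h))
    · rcases eq_or_ne (μ.fm 2) ({3} : Finset (Fin 4)) with h | h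
      · exact Or.inl h.symm
      · exact Or.inr (hf3.gt_rk ((by decide : ∀ A : Finset (Fin 4), A ≠ {3} →
          Pref.rk [{3}, {0}] {3} < Pref.rk [{3}, {0}] A) _ h))
  · -- worker optimality in the true market
    intro μ hst w
    fin_cases w
    · rcases eq_or_ne (μ.wm 0) ({0} : Finset (Fin 3)) with h | h
      · exact Or.inl h.symm
      · exact Or.inr (hw1.gt_rk ((by decide : ∀ A : Finset (Fin 3), A ≠ {0} →
          Pref.rk [{0}, {2}, {1}] {0} < Pref.rk [{0}, {2}, {1}] A) _ h))
    · rcases eq_or_ne (μ.wm 1) ({1} : Finset (Fin 3)) with h | h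
      · exact Or.inl h.symm
      · exact Or.inr (hw2.gt_rk ((by decide : ∀ A : Finset (Fin 3), A ≠ {1} →
          Pref.rk [{1}, {0}] {1} < Pref.rk [{1}, {0}] A) _ h))
    · rcases eq_or_ne (μ.wm 2) ({0} : Finset (Fin 3)) with h | h
      · exact Or.inl h.symm
      · exact Or.inr (hw3.gt_rk ((by decide : ∀ A : Finset (Fin 3), A ≠ {0} →
          Pref.rk [{0}, {2}] {0} < Pref.rk [{0}, {2}] A) _ h))
    · rcases eq_or_ne (μ.wm 3) ({2} : Finset (Fin 3)) with h | h
      · exact Or.inl h.symm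
      · refine Or.inr (hw4.gt_rk ?_)
        have h0 : μ.wm 3 ≠ {0} := fun e =>
          ruleA hf1 hf2 hf3 hw1 hw2 hw3 hw4 hst (by rw [e]; decide)
        exact (by decide : ∀ A : Finset (Fin 3), A ≠ {2} → A ≠ {0} →
          Pref.rk [{0}, {2}] {2} < Pref.rk [{0}, {2}] A) _ h h0
  · -- firm optimality in the misreported market
    intro μ hst f
    fin_cases f
    · rcases eq_or_ne (μ.fm 0) ({2, 3} : Finset (Fin 4)) with h | h
      · exact Or.inl h.symm
      · refine Or.inr (hqf1.gt_rk ?_)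
        have hC := ruleC hqf2 hq1 hq2 hst
        have h0 : (0 : Fin 4) ∉ μ.fm 0 := fun hh => (ruleB hq1 hst).1 ((μ.compat 0 0).mp hh)
        exact (by decide : ∀ A : Finset (Fin 4), A ≠ {2, 3} → A ≠ {1, 2} → A ≠ {1, 3} →
          (0 : Fin 4) ∉ A →
          Pref.rk [{1, 2}, {1, 3}, {0, 2}, {0, 1}, {0, 3}, {2, 3}, {0}, {1}, {2}, {3}] {2, 3} <
          Pref.rk [{1, 2}, {1, 3}, {0, 2}, {0, 1}, {0, 3}, {2, 3}, {0}, {1}, {2}, {3}] A)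
          _ h hC.1 hC.2 h0
    · rcases eq_or_ne (μ.fm 1) ({1} : Finset (Fin 4)) with h | h
      · exact Or.inl h.symm
      · refine Or.inr (hqf2.gt_rk ?_)
        have h0 : (0 : Fin 4) ∉ μ.fm 1 := fun hh => (ruleB hq1 hst).2 ((μ.compat 1 0).mp hh)
        exact (by decide : ∀ A : Finset (Fin 4), A ≠ {1} → (0 : Fin 4) ∉ A →
          Pref.rk [{0}, {1}] {1} < Pref.rk [{0}, {1}] A) _ h h0
    · rcases eq_or_ne (μ.fm 2) ({0} : Finset (Fin 4)) with h | h
      · exact Or.inl h.symm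
      · refine Or.inr (hqf3.gt_rk ?_)
        have h3 := ruleD hqf1 hqf2 hq1 hq2 hq4 hst
        exact (by decide : ∀ A : Finset (Fin 4), A ≠ {0} → A ≠ {3} →
          Pref.rk [{3}, {0}] {0} < Pref.rk [{3}, {0}] A) _ h h3
  · -- μF' is not stable in the true market
    intro hs
    exact hs.2 0 0 hblk
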